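/- Let X_1,…,X_n be independent random variables, each taking values in {0,1}, let X = X_1 + ⋯ + X_n and μ = E[X]. Then P(X ≥ μ/2) ≥ (1/2)·min{1, μ}. -/

import Mathlib

open MeasureTheory ProbabilityTheory

section AuxReal

lemma aux_exp_cubic {x : ℝ} (h0 : 0 ≤ x) (h1 : x ≤ 1) :
    Real.exp x ≤ 1 + x + x^2/2 + (11/50)*x^3 := by
  have h := Real.exp_bound' h0 h1 (n := 4) (by norm_num)
  have hs : (∑ m ∈ Finset.range 4, x ^ m / m.factorial) = 1 + x + x^2/2 + x^3/6 := by
    norm_num [Finset.sum_range_succ, Nat.factorial]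
  rw [hs] at h
  have hf : ((Nat.factorial 4 : ℕ) : ℝ) = 24 := by norm_num [Nat.factorial]
  rw [hf] at h
  have hx4 : x^4 ≤ x^3 := pow_le_pow_of_le_one h0 h1 (by norm_num)
  nlinarith [h]

lemma aux_mul_exp_le {p : ℝ} (h0 : 0 ≤ p) (h1 : p ≤ 73/100) :
    (1 - p) * Real.exp (p + p^2/2) ≤ 1 := by
  set x := p + p^2/2 with hx
  have hx0 : 0 ≤ x := by positivity
  have hx1 : x ≤ 1 := by rw [hx]; nlinarith [mul_self_le_mul_self h0 h1]
  have hc := aux_exp_cubic hx0 hx1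
  have h2 : (1 - p) * Real.exp x ≤ (1 - p) * (1 + x + x^2/2 + (11/50)*x^3) := by
    have hnn : (0:ℝ) ≤ 1 - p := by linarith
    exact mul_le_mul_of_nonneg_left hc hnn
  have h3 : (1 - p) * (1 + x + x^2/2 + (11/50)*x^3) ≤ 1 := by
    rw [hx]
    nlinarith [pow_nonneg h0 3, pow_nonneg h0 4, pow_nonneg h0 5, pow_nonneg h0 6,
      pow_nonneg h0 7]
  linarith

lemma aux_one_sub_le {p : ℝ} (h0 : 0 ≤ p) (h1 : p ≤ 73/100) :
    1 - p ≤ Real.exp (-(p + p^2/2)) := by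
  have hkey := aux_mul_exp_le h0 h1
  have hmul : Real.exp (p + p^2/2) * Real.exp (-(p + p^2/2)) = 1 := by
    rw [← Real.exp_add, add_neg_cancel, Real.exp_zero]
  calc 1 - p = ((1 - p) * Real.exp (p + p^2/2)) * Real.exp (-(p + p^2/2)) := by
        rw [mul_assoc, hmul]; ring
    _ ≤ 1 * Real.exp (-(p + p^2/2)) :=
        mul_le_mul_of_nonneg_right hkey (Real.exp_pos _).le
    _ = Real.exp (-(p + p^2/2)) := one_mul _

lemma aux_pe {p : ℝ} (h0 : 0 ≤ p) (h1 : p ≤ 73/100) :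
    p * Real.exp (p + p^2/2) ≤ p + (59/25)*p^2 := by
  set x := p + p^2/2 with hx
  have hx0 : 0 ≤ x := by positivity
  have hx1 : x ≤ 1 := by rw [hx]; nlinarith [mul_self_le_mul_self h0 h1]
  have hc := aux_exp_cubic hx0 hx1
  have h2 : p * Real.exp x ≤ p * (1 + x + x^2/2 + (11/50)*x^3) :=
    mul_le_mul_of_nonneg_left hc h0
  have h3 : p * (1 + x + x^2/2 + (11/50)*x^3) ≤ p + (59/25)*p^2 := by
    rw [hx]
    nlinarith [pow_nonneg h0 2, pow_nonneg h0 3, pow_nonneg h0 4, pow_nonneg h0 5,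
      pow_nonneg h0 6, pow_nonneg h0 7,
      pow_le_pow_left₀ h0 h1 2, pow_le_pow_left₀ h0 h1 3, pow_le_pow_left₀ h0 h1 4,
      pow_le_pow_left₀ h0 h1 5, pow_le_pow_left₀ h0 h1 6]
  linarith

lemma aux_exp_two_ge : (7389/1000 : ℝ) ≤ Real.exp 2 := by
  have h := Real.exp_one_gt_d9
  have h2 : Real.exp 2 = Real.exp 1 * Real.exp 1 := by
    rw [← Real.exp_add]; norm_num
  rw [h2]; nlinarith

lemma aux_case_d1 {m μ : ℝ} (hm0 : 73/100 ≤ m) (hm1 : m ≤ 1) (hμ : 2 ≤ μ) :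
    (1 - m) + m * Real.exp (m - μ) ≤ 1/2 := by
  have h0m : (0:ℝ) ≤ m := by linarith
  have hcub := aux_exp_cubic h0m hm1
  have he2 := aux_exp_two_ge
  have hμ2 : Real.exp 2 ≤ Real.exp μ := Real.exp_le_exp.2 hμ
  have h1 : Real.exp (m - μ) ≤ Real.exp m / Real.exp 2 := by
    rw [Real.exp_sub]
    exact div_le_div_of_nonneg_left (Real.exp_pos m).le (by positivity) hμ2
  have h2 : Real.exp m / Real.exp 2 ≤ (1 + m + m^2/2 + (11/50)*m^3) / (7389/1000) := by
    apply div_le_div₀ (by positivity) hcub (by norm_num) he2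
  have h3 : m * Real.exp (m - μ) ≤ m * ((1 + m + m^2/2 + (11/50)*m^3) / (7389/1000)) :=
    mul_le_mul_of_nonneg_left (le_trans h1 h2) h0m
  have h4 : m * ((1 + m + m^2/2 + (11/50)*m^3) / (7389/1000)) ≤ m - 1/2 := by
    rw [mul_div_assoc', div_le_iff₀ (by norm_num : (0:ℝ) < 7389/1000)]
    nlinarith [pow_nonneg h0m 2, pow_nonneg h0m 3, pow_nonneg h0m 4,
      mul_nonneg (sub_nonneg.2 hm0) (sub_nonneg.2 hm1),
      pow_le_pow_left₀ h0m hm1 2, pow_le_pow_left₀ h0m hm1 3, pow_le_pow_left₀ h0m hm1 4]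
  linarith

lemma aux_case_d2 {μ D R : ℝ} (hμ : 2 ≤ μ) (hD : 0 ≤ D) (hR : 0 ≤ R)
    (h : R ≤ Real.exp (-(μ + D/2)) * (1 + μ + (59/25)*D)) : R ≤ 1/2 := by
  have he2 := aux_exp_two_ge
  have b1 : (μ - 1 : ℝ) ≤ Real.exp (μ - 2) := by
    have := Real.add_one_le_exp (μ - 2); linarith
  have b2 : (1 + D/4 : ℝ) ≤ Real.exp (D/4) := by
    have := Real.add_one_le_exp (D/4); linarith
  have hD4 : (0:ℝ) ≤ 1 + D/4 := by linarith
  have hμ1 : (0:ℝ) ≤ μ - 1 := by linarith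
  have e1 : Real.exp 2 * Real.exp (μ - 2) * (Real.exp (D/4) * Real.exp (D/4))
      = Real.exp (μ + D/2) := by
    rw [← Real.exp_add, ← Real.exp_add, ← Real.exp_add]; congr 1; ring
  have hL : (7389/1000) * (μ - 1) * ((1 + D/4)*(1 + D/4)) ≤ Real.exp (μ + D/2) := by
    rw [← e1]
    have hA : (7389/1000) * (μ - 1) ≤ Real.exp 2 * Real.exp (μ - 2) :=
      mul_le_mul he2 b1 hμ1 (Real.exp_pos _).le
    have hB : (1 + D/4)*(1 + D/4) ≤ Real.exp (D/4) * Real.exp (D/4) :=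
      mul_le_mul b2 b2 hD4 (Real.exp_pos _).le
    exact mul_le_mul hA hB (by positivity) (by positivity)
  have hnum : 2 * (1 + μ + (59/25)*D) ≤ (7389/1000) * (μ - 1) * ((1 + D/4)*(1 + D/4)) := by
    nlinarith [sq_nonneg (D - 111/100), mul_nonneg (sub_nonneg.2 hμ) hD,
      mul_nonneg (sub_nonneg.2 hμ) (mul_nonneg hD hD), sq_nonneg D, mul_nonneg hD hD]
  have hpos : (0:ℝ) < Real.exp (μ + D/2) := Real.exp_pos _
  have h5 : R * Real.exp (μ + D/2) ≤ 1 + μ + (59/25)*D := by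
    rw [Real.exp_neg, ← div_eq_inv_mul] at h
    exact (le_div_iff₀ hpos).1 h
  nlinarith [mul_le_mul_of_nonneg_left hL hR]

end AuxReal

/-- Let `X_1, …, X_n` be independent `{0,1}`-valued random
variables, `X = X_1 + ⋯ + X_n` and `μ = E[X]`. Then
`P(X ≥ μ/2) ≥ (1/2)·min{1, μ}`. -/
theorem stmt_5 {Ω : Type*} [MeasureSpace Ω] [IsProbabilityMeasure (ℙ : Measure Ω)]
    (n : ℕ) (X : Fin n → Ω → ℝ)
    (hmeas : ∀ i, Measurable (X i))
    (h01 : ∀ i ω, X i ω = 0 ∨ X i ω = 1)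
    (hindep : iIndepFun X ℙ)
    (μ : ℝ) (hμ : μ = ∫ ω, (∑ i, X i ω) ∂ℙ) :
    ENNReal.ofReal ((1 / 2) * min 1 μ) ≤ ℙ {ω | μ / 2 ≤ ∑ i, X i ω} := by
  classical
  set T : Set Ω := {ω | μ / 2 ≤ ∑ i, X i ω} with hT
  have hTmeas : MeasurableSet T :=
    measurableSet_le measurable_const (Finset.measurable_sum _ fun i _ => hmeas i)
  set A : Fin n → Set Ω := fun i => X i ⁻¹' {1} with hA
  have hAm : ∀ i, MeasurableSet (A i) := fun i => hmeas i (measurableSet_singleton 1)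
  set p : Fin n → ℝ := fun i => (ℙ (A i)).toReal with hp
  have hfin : ∀ s : Set Ω, ℙ s ≠ ⊤ := fun s => measure_ne_top _ _
  have hp0 : ∀ i, 0 ≤ p i := fun i => ENNReal.toReal_nonneg
  have hp1 : ∀ i, p i ≤ 1 := by
    intro i
    calc (ℙ (A i)).toReal ≤ (1 : ENNReal).toReal :=
          ENNReal.toReal_mono (by simp) prob_le_one
      _ = 1 := by simp
  have hXind : ∀ i, X i = (A i).indicator (fun _ => (1:ℝ)) := by
    intro i; funext ω
    rcases h01 i ω with h | h
    · have : ω ∉ A i := by simp [hA, Set.mem_preimage, h]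
      simp [Set.indicator_of_notMem this, h]
    · have : ω ∈ A i := by simp [hA, Set.mem_preimage, h]
      simp [Set.indicator_of_mem this, h]
  have hint : ∀ i, Integrable (X i) ℙ := by
    intro i; rw [hXind i]
    exact (integrable_const (1:ℝ)).indicator (hAm i)
  have hEX : ∀ i, ∫ ω, X i ω ∂ℙ = p i := by
    intro i
    rw [hXind i]
    rw [integral_indicator_const (1:ℝ) (hAm i)]
    simp [hp, measureReal_def]
  have hμsum : μ = ∑ i, p i := by
    rw [hμ, integral_finset_sum Finset.univ (fun i _ => hint i)]
    exact Finset.sum_congr rfl fun i _ => hEX i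
  have hμ0 : 0 ≤ μ := by
    rw [hμsum]; exact Finset.sum_nonneg fun i _ => hp0 i
  have hA0 : ∀ i, X i ⁻¹' ({0} : Set ℝ) = (A i)ᶜ := by
    intro i; ext ω
    rcases h01 i ω with h | h <;>
      simp [hA, Set.mem_preimage, h]
  have hcompl : ∀ i, (ℙ ((A i)ᶜ)).toReal = 1 - p i := by
    intro i
    rw [measure_compl (hAm i) (hfin _), measure_univ,
      ENNReal.toReal_sub_of_le prob_le_one (by simp)]
    simp [hp]
  have hIndep := iIndepFun_iff_measure_inter_preimage_eq_mul.1 hindep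
  -- measure of "all zero"
  have hZmeasure : (ℙ (⋂ i, (A i)ᶜ)).toReal = ∏ i, (1 - p i) := by
    have h := hIndep Finset.univ (sets := fun _ => ({0} : Set ℝ))
      (fun i _ => measurableSet_singleton 0)
    have hset : (⋂ i ∈ Finset.univ, X i ⁻¹' ({0}:Set ℝ)) = ⋂ i, (A i)ᶜ := by
      simp [hA0]
    rw [hset] at h
    rw [h, ENNReal.toReal_prod]
    exact Finset.prod_congr rfl fun i _ => by rw [hA0 i]; exact hcompl i
  -- the events "X_k = 1, all others 0"
  set W : Fin n → Set Ω :=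
    fun k => ⋂ j, X j ⁻¹' (if j = k then ({1}:Set ℝ) else {0}) with hW
  have hWmeasure : ∀ k, (ℙ (W k)).toReal
      = p k * ∏ j ∈ Finset.univ.erase k, (1 - p j) := by
    intro k
    have h := hIndep Finset.univ (sets := fun j => if j = k then ({1}:Set ℝ) else {0})
      (fun i _ => by split <;> exact measurableSet_singleton _)
    have hset : (⋂ i ∈ Finset.univ, X i ⁻¹' (if i = k then ({1}:Set ℝ) else {0})) = W k := by
      simp [hW]
    rw [hset] at h
    rw [h, ← Finset.mul_prod_erase Finset.univ _ (Finset.mem_univ k),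
      ENNReal.toReal_mul, ENNReal.toReal_prod]
    congr 1
    · simp [hp, hA]
    refine Finset.prod_congr rfl fun j hj => ?_
    have hjk : j ≠ k := Finset.ne_of_mem_erase hj
    simp only [hjk, if_false]
    rw [hA0 j]
    exact hcompl j
  -- basic positivity of coordinates
  have hXnn : ∀ i ω, 0 ≤ X i ω := by
    intro i ω; rcases h01 i ω with h | h <;> rw [h] <;> norm_num
  have hone : ∀ ω i, X i ω = 1 → (1:ℝ) ≤ ∑ j, X j ω := by
    intro ω i h
    have hs := Finset.single_le_sum (f := fun j => X j ω)
      (fun j _ => hXnn j ω) (Finset.mem_univ i)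
    simpa [h] using hs
  have htwo : ∀ ω i j, i ≠ j → X i ω = 1 → X j ω = 1 → (2:ℝ) ≤ ∑ l, X l ω := by
    intro ω i j hij hi hj
    have hsub : ({i, j} : Finset (Fin n)) ⊆ Finset.univ := Finset.subset_univ _
    have hs := Finset.sum_le_sum_of_subset_of_nonneg hsub
      (fun l _ _ => hXnn l ω)
    rw [Finset.sum_pair hij, hi, hj] at hs
    linarith
  -- complement probability
  have hTc : (ℙ Tᶜ).toReal = 1 - (ℙ T).toReal := by
    rw [measure_compl hTmeas (hfin T), measure_univ,
      ENNReal.toReal_sub_of_le prob_le_one (by simp)]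
    simp
  have hTcnn : 0 ≤ (ℙ Tᶜ).toReal := ENNReal.toReal_nonneg
  -- reduce to a real inequality
  suffices hreal : (1/2) * min 1 μ ≤ (ℙ T).toReal by
    have h2 := ENNReal.ofReal_le_ofReal hreal
    rwa [ENNReal.ofReal_toReal (hfin T)] at h2
  rcases le_or_gt μ 0 with hμneg | hμpos
  · have h1 : (1/2) * min 1 μ ≤ 0 := by
      have : min 1 μ ≤ 0 := le_trans (min_le_right _ _) hμneg
      linarith
    exact le_trans h1 ENNReal.toReal_nonneg
  -- exp product bound (general): for s : Finset, with f i bounding each factor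
  have hprodexp : ∀ (s : Finset (Fin n)), (∀ i ∈ s, 1 - p i ≤ Real.exp (-(p i + (p i)^2/2))) →
      ∏ i ∈ s, (1 - p i) ≤ Real.exp (-(∑ i ∈ s, (p i + (p i)^2/2))) := by
    intro s hf
    calc ∏ i ∈ s, (1 - p i) ≤ ∏ i ∈ s, Real.exp (-(p i + (p i)^2/2)) :=
          Finset.prod_le_prod (fun i _ => by have := hp1 i; linarith) hf
      _ = Real.exp (∑ i ∈ s, -(p i + (p i)^2/2)) := (Real.exp_sum _ _).symm
      _ = Real.exp (-(∑ i ∈ s, (p i + (p i)^2/2))) := by rw [Finset.sum_neg_distrib]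
  -- simple exp bound valid for all p ∈ [0,1]
  have hosimple : ∀ i, 1 - p i ≤ Real.exp (-(p i)) := by
    intro i
    have := Real.add_one_le_exp (-(p i)); linarith
  rcases le_or_gt μ 2 with hμ2 | hμgt2
  · -- 0 < μ ≤ 2 : use P(X ≥ 1) = 1 - ∏(1 - p i)
    have hsub : Tᶜ ⊆ ⋂ i, (A i)ᶜ := by
      intro ω hω
      simp only [hT, Set.mem_compl_iff, Set.mem_setOf_eq, not_le] at hω
      simp only [Set.mem_iInter, Set.mem_compl_iff, hA, Set.mem_preimage,
        Set.mem_singleton_iff]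
      intro i hXi
      have h1 := hone ω i hXi
      linarith
    have hPZ : (ℙ Tᶜ).toReal ≤ ∏ i, (1 - p i) := by
      rw [← hZmeasure]
      exact ENNReal.toReal_mono (hfin _) (measure_mono hsub)
    have hQexp : ∏ i, (1 - p i) ≤ Real.exp (-μ) := by
      calc ∏ i, (1 - p i) ≤ ∏ i, Real.exp (-(p i)) :=
            Finset.prod_le_prod (fun i _ => by have := hp1 i; linarith)
              (fun i _ => hosimple i)
        _ = Real.exp (∑ i, -(p i)) := (Real.exp_sum _ _).symm
        _ = Real.exp (-μ) := by rw [Finset.sum_neg_distrib, ← hμsum]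
    have hQinv : Real.exp (-μ) ≤ 1/(1+μ) := by
      rw [Real.exp_neg]
      have h1 : (1:ℝ) + μ ≤ Real.exp μ := by
        have := Real.add_one_le_exp μ; linarith
      rw [one_div]
      exact inv_anti₀ (by linarith) h1
    have htr : 1 - 1/(1+μ) ≤ (ℙ T).toReal := by
      have hchain : (ℙ Tᶜ).toReal ≤ 1/(1+μ) := le_trans hPZ (le_trans hQexp hQinv)
      linarith [hTc, hchain]
    have hkey : (1/2) * min 1 μ ≤ 1 - 1/(1+μ) := by
      have hinv : 1/(1+μ) ≤ 1 - (1/2) * min 1 μ := by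
        rw [div_le_iff₀ (by linarith : (0:ℝ) < 1 + μ)]
        rcases le_total μ 1 with h | h
        · rw [min_eq_right h]; nlinarith
        · rw [min_eq_left h]; nlinarith
      linarith
    linarith
  rcases le_or_gt μ 4 with hμ4 | hμgt4
  · -- 2 < μ ≤ 4
    have hmin : min (1:ℝ) μ = 1 := min_eq_left (by linarith)
    rw [hmin]
    -- at most one coordinate is 1 on Tᶜ
    have hWmem : ∀ ω, ω ∈ Tᶜ → ∀ k, X k ω = 1 → ω ∈ W k := by
      intro ω hω k hk
      simp only [hT, Set.mem_compl_iff, Set.mem_setOf_eq, not_le] at hω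
      simp only [hW, Set.mem_iInter, Set.mem_preimage]
      intro j
      by_cases hjk : j = k
      · simp [hjk, hk]
      · simp only [hjk, if_false, Set.mem_singleton_iff]
        rcases h01 j ω with h0 | h1
        · exact h0
        · exfalso
          have := htwo ω j k hjk h1 hk
          linarith
    by_cases hex : ∃ k, (73:ℝ)/100 ≤ p k
    · obtain ⟨k, hk⟩ := hex
      have hsub : Tᶜ ⊆ (A k)ᶜ ∪ W k := by
        intro ω hω
        rcases h01 k ω with h0 | h1
        · left
          simp only [Set.mem_compl_iff, hA, Set.mem_preimage, Set.mem_singleton_iff]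
          rw [h0]; norm_num
        · right; exact hWmem ω hω k h1
      have hP1 : (ℙ Tᶜ).toReal ≤ (1 - p k) + p k * ∏ j ∈ Finset.univ.erase k, (1 - p j) := by
        have hm : ℙ Tᶜ ≤ ℙ ((A k)ᶜ) + ℙ (W k) :=
          le_trans (measure_mono hsub) (measure_union_le _ _)
        have hm2 := ENNReal.toReal_mono
          (by exact ENNReal.add_ne_top.2 ⟨hfin _, hfin _⟩) hm
        rw [ENNReal.toReal_add (hfin _) (hfin _), hcompl k, hWmeasure k] at hm2
        exact hm2
      have hErest : ∑ j ∈ Finset.univ.erase k, p j = μ - p k := by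
        have := Finset.add_sum_erase Finset.univ p (Finset.mem_univ k)
        rw [hμsum]; linarith
      have hprod : ∏ j ∈ Finset.univ.erase k, (1 - p j) ≤ Real.exp (p k - μ) := by
        calc ∏ j ∈ Finset.univ.erase k, (1 - p j)
            ≤ ∏ j ∈ Finset.univ.erase k, Real.exp (-(p j)) :=
              Finset.prod_le_prod (fun i _ => by have := hp1 i; linarith)
                (fun i _ => hosimple i)
          _ = Real.exp (∑ j ∈ Finset.univ.erase k, -(p j)) := (Real.exp_sum _ _).symm
          _ = Real.exp (p k - μ) := by
              rw [Finset.sum_neg_distrib, hErest]; congr 1; ring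
      have hfinal : (ℙ Tᶜ).toReal ≤ 1/2 := by
        have h2 := aux_case_d1 hk (hp1 k) (le_of_lt hμgt2)
        have h3 : p k * ∏ j ∈ Finset.univ.erase k, (1 - p j)
            ≤ p k * Real.exp (p k - μ) :=
          mul_le_mul_of_nonneg_left hprod (hp0 k)
        linarith
      linarith [hTc, hfinal]
    · -- all p i < 0.73
      push_neg at hex
      set D : ℝ := ∑ i, (p i)^2 with hD
      have hD0 : 0 ≤ D := Finset.sum_nonneg fun i _ => sq_nonneg _
      have hsub2 : Tᶜ ⊆ (⋂ i, (A i)ᶜ) ∪ ⋃ k, W k := by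
        intro ω hω
        by_cases hωex : ∃ k, X k ω = 1
        · obtain ⟨k, hk⟩ := hωex
          right
          exact Set.mem_iUnion.2 ⟨k, hWmem ω hω k hk⟩
        · push_neg at hωex
          left
          simp only [Set.mem_iInter, Set.mem_compl_iff, hA, Set.mem_preimage,
            Set.mem_singleton_iff]
          exact fun i => hωex i
      have hsumW_ne : ∑ k, ℙ (W k) ≠ ⊤ :=
        ENNReal.sum_ne_top.2 fun k _ => hfin _
      have hUbound : ℙ Tᶜ ≤ ℙ (⋂ i, (A i)ᶜ) + ∑ k, ℙ (W k) :=
        le_trans (measure_mono hsub2)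
          (le_trans (measure_union_le _ _)
            (add_le_add_right (measure_iUnion_fintype_le _ _) _))
      have hRbound : (ℙ Tᶜ).toReal
          ≤ ∏ i, (1 - p i) + ∑ k, p k * ∏ j ∈ Finset.univ.erase k, (1 - p j) := by
        have h2 := ENNReal.toReal_mono
          (ENNReal.add_ne_top.2 ⟨hfin _, hsumW_ne⟩) hUbound
        rw [ENNReal.toReal_add (hfin _) hsumW_ne, hZmeasure,
          ENNReal.toReal_sum (fun k _ => hfin _)] at h2
        calc (ℙ Tᶜ).toReal ≤ ∏ i, (1 - p i) + ∑ k, (ℙ (W k)).toReal := h2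
          _ = ∏ i, (1 - p i) + ∑ k, p k * ∏ j ∈ Finset.univ.erase k, (1 - p j) := by
              rw [Finset.sum_congr rfl fun k _ => hWmeasure k]
      have hsumfull : ∑ i, (p i + (p i)^2/2) = μ + D/2 := by
        rw [Finset.sum_add_distrib, ← hμsum, hD, Finset.sum_div]
      have honesub : ∀ i, 1 - p i ≤ Real.exp (-(p i + (p i)^2/2)) :=
        fun i => aux_one_sub_le (hp0 i) (le_of_lt (hex i))
      have hQ2 : ∏ i, (1 - p i) ≤ Real.exp (-(μ + D/2)) := by
        have := hprodexp Finset.univ (fun i _ => honesub i)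
        rwa [hsumfull] at this
      have hWk2 : ∀ k, p k * ∏ j ∈ Finset.univ.erase k, (1 - p j)
          ≤ (p k + (59/25)*(p k)^2) * Real.exp (-(μ + D/2)) := by
        intro k
        have hEk : ∑ j ∈ Finset.univ.erase k, (p j + (p j)^2/2)
            = (μ + D/2) - (p k + (p k)^2/2) := by
          have := Finset.add_sum_erase Finset.univ (fun j => p j + (p j)^2/2)
            (Finset.mem_univ k)
          rw [← hsumfull]
          linarith [this]
        have hprodk : ∏ j ∈ Finset.univ.erase k, (1 - p j)
            ≤ Real.exp (p k + (p k)^2/2) * Real.exp (-(μ + D/2)) := by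
          have h3 := hprodexp (Finset.univ.erase k) (fun i _ => honesub i)
          rw [hEk] at h3
          calc ∏ j ∈ Finset.univ.erase k, (1 - p j)
              ≤ Real.exp (-((μ + D/2) - (p k + (p k)^2/2))) := h3
            _ = Real.exp (p k + (p k)^2/2) * Real.exp (-(μ + D/2)) := by
                rw [← Real.exp_add]; congr 1; ring
        calc p k * ∏ j ∈ Finset.univ.erase k, (1 - p j)
            ≤ p k * (Real.exp (p k + (p k)^2/2) * Real.exp (-(μ + D/2))) :=
              mul_le_mul_of_nonneg_left hprodk (hp0 k)
          _ = (p k * Real.exp (p k + (p k)^2/2)) * Real.exp (-(μ + D/2)) := by ring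
          _ ≤ (p k + (59/25)*(p k)^2) * Real.exp (-(μ + D/2)) :=
              mul_le_mul_of_nonneg_right (aux_pe (hp0 k) (le_of_lt (hex k)))
                (Real.exp_pos _).le
      have hsum2 : ∑ k, p k * ∏ j ∈ Finset.univ.erase k, (1 - p j)
          ≤ (μ + (59/25)*D) * Real.exp (-(μ + D/2)) := by
        calc ∑ k, p k * ∏ j ∈ Finset.univ.erase k, (1 - p j)
            ≤ ∑ k, (p k + (59/25)*(p k)^2) * Real.exp (-(μ + D/2)) :=
              Finset.sum_le_sum fun k _ => hWk2 k
          _ = (∑ k, (p k + (59/25)*(p k)^2)) * Real.exp (-(μ + D/2)) := by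
              rw [Finset.sum_mul]
          _ = (μ + (59/25)*D) * Real.exp (-(μ + D/2)) := by
              rw [Finset.sum_add_distrib, ← hμsum, ← Finset.mul_sum, hD]
      have hfinal : (ℙ Tᶜ).toReal ≤ 1/2 := by
        apply aux_case_d2 (le_of_lt hμgt2) hD0 hTcnn
        calc (ℙ Tᶜ).toReal
            ≤ ∏ i, (1 - p i) + ∑ k, p k * ∏ j ∈ Finset.univ.erase k, (1 - p j) := hRbound
          _ ≤ Real.exp (-(μ + D/2)) + (μ + (59/25)*D) * Real.exp (-(μ + D/2)) := by
              linarith [hQ2, hsum2]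
          _ = Real.exp (-(μ + D/2)) * (1 + μ + (59/25)*D) := by ring
      linarith [hTc, hfinal]
  · -- μ > 4 : Chebyshev/Cantelli
    have hmin : min (1:ℝ) μ = 1 := min_eq_left (by linarith)
    rw [hmin]
    set S : Ω → ℝ := fun ω => ∑ i, X i ω with hS
    have hSint : Integrable S ℙ := integrable_finset_sum _ (fun i _ => hint i)
    have hmemA : ∀ i ω, ω ∈ A i ↔ X i ω = 1 := by
      intro i ω; simp [hA]
    have hprodind : ∀ i j, (fun ω => X i ω * X j ω)
        = (A i ∩ A j).indicator (fun _ => (1:ℝ)) := by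
      intro i j; funext ω
      by_cases hmem : ω ∈ A i ∩ A j
      · rw [Set.indicator_of_mem hmem]
        rw [(hmemA i ω).1 hmem.1, (hmemA j ω).1 hmem.2]; norm_num
      · rw [Set.indicator_of_notMem hmem]
        rcases h01 i ω with hi | hi
        · rw [hi]; ring
        · rcases h01 j ω with hj | hj
          · rw [hj]; ring
          · exact absurd ⟨(hmemA i ω).2 hi, (hmemA j ω).2 hj⟩ hmem
    have hprodint : ∀ i j, Integrable (fun ω => X i ω * X j ω) ℙ := by
      intro i j; rw [hprodind i j]
      exact (integrable_const (1:ℝ)).indicator ((hAm i).inter (hAm j))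
    have hEprod : ∀ i j, ∫ ω, X i ω * X j ω ∂ℙ = (ℙ (A i ∩ A j)).toReal := by
      intro i j
      rw [hprodind i j, integral_indicator_const (1:ℝ) ((hAm i).inter (hAm j))]
      simp [measureReal_def]
    have hEprod_ne : ∀ i j, i ≠ j → ∫ ω, X i ω * X j ω ∂ℙ = p i * p j := by
      intro i j hij
      rw [hEprod i j]
      have h := hIndep {i, j} (sets := fun _ => ({1} : Set ℝ))
        (fun l _ => measurableSet_singleton 1)
      have hset : (⋂ l ∈ ({i, j} : Finset (Fin n)), X l ⁻¹' ({1}:Set ℝ)) = A i ∩ A j := by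
        simp [hA]
      rw [hset, Finset.prod_pair hij] at h
      rw [h, ENNReal.toReal_mul]
    have hEsq_diag : ∀ i, ∫ ω, X i ω * X i ω ∂ℙ = p i := by
      intro i; rw [hEprod i i, Set.inter_self]
    have hS2eq : (fun ω => (S ω)^2) = fun ω => ∑ i, ∑ j, X i ω * X j ω := by
      funext ω
      rw [sq]
      exact Finset.sum_mul_sum _ _ _ _
    have hS2int : Integrable (fun ω => (S ω)^2) ℙ := by
      rw [hS2eq]
      exact integrable_finset_sum _
        (fun i _ => integrable_finset_sum _ (fun j _ => hprodint i j))
    have hErest2 : ∀ i : Fin n, ∑ j ∈ Finset.univ.erase i, p j ≤ μ := by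
      intro i
      have h4 := Finset.add_sum_erase Finset.univ p (Finset.mem_univ i)
      have := hp0 i
      rw [hμsum]
      linarith
    have hES2 : ∫ ω, (S ω)^2 ∂ℙ ≤ μ + μ^2 := by
      have h1 : ∫ ω, (S ω)^2 ∂ℙ = ∑ i, ∑ j, ∫ ω, X i ω * X j ω ∂ℙ := by
        rw [hS2eq, integral_finset_sum _
          (fun i _ => integrable_finset_sum _ (fun j _ => hprodint i j))]
        exact Finset.sum_congr rfl fun i _ =>
          integral_finset_sum _ (fun j _ => hprodint i j)
      rw [h1]
      have h2 : ∀ i : Fin n, ∑ j, ∫ ω, X i ω * X j ω ∂ℙ ≤ p i + p i * μ := by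
        intro i
        rw [← Finset.add_sum_erase Finset.univ _ (Finset.mem_univ i)]
        have h3 : ∑ j ∈ Finset.univ.erase i, ∫ ω, X i ω * X j ω ∂ℙ
            = ∑ j ∈ Finset.univ.erase i, p i * p j :=
          Finset.sum_congr rfl fun j hj =>
            hEprod_ne i j (Ne.symm (Finset.ne_of_mem_erase hj))
        rw [h3, hEsq_diag i, ← Finset.mul_sum]
        have := mul_le_mul_of_nonneg_left (hErest2 i) (hp0 i)
        linarith
      calc ∑ i, ∑ j, ∫ ω, X i ω * X j ω ∂ℙ ≤ ∑ i, (p i + p i * μ) :=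
            Finset.sum_le_sum fun i _ => h2 i
        _ = μ + μ * μ := by
            rw [Finset.sum_add_distrib, ← Finset.sum_mul, ← hμsum]
        _ ≤ μ + μ^2 := by nlinarith
    have heq : (fun ω => (2 + μ - S ω)^2)
        = fun ω => ((2+μ)^2 - (2*(2+μ)) * S ω) + (S ω)^2 := by
      funext ω; ring
    have hint2 : Integrable (fun ω => (2*(2+μ)) * S ω) ℙ := hSint.const_mul _
    have hint1 : Integrable (fun ω => (2+μ)^2 - (2*(2+μ)) * S ω) ℙ :=
      (integrable_const _).sub hint2
    have hgint : Integrable (fun ω => (2 + μ - S ω)^2) ℙ := by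
      rw [heq]
      exact hint1.add hS2int
    have hESμ : ∫ ω, S ω ∂ℙ = μ := hμ.symm
    have hEg : ∫ ω, (2 + μ - S ω)^2 ∂ℙ ≤ 4 + μ := by
      rw [heq, integral_add hint1 hS2int,
        integral_sub (integrable_const ((2+μ)^2)) hint2,
        integral_const, integral_const_mul, hESμ]
      simp only [probReal_univ, smul_eq_mul, one_mul]
      nlinarith [hES2]
    have hind_int : Integrable (Tᶜ.indicator (fun _ => (2 + μ/2)^2)) ℙ :=
      (integrable_const _).indicator hTmeas.compl
    have hpt : ∀ ω, Tᶜ.indicator (fun _ => (2 + μ/2)^2) ω ≤ (2 + μ - S ω)^2 := by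
      intro ω
      by_cases hω : ω ∈ Tᶜ
      · rw [Set.indicator_of_mem hω]
        have hlt : S ω < μ/2 := by
          simp only [hT, Set.mem_compl_iff, Set.mem_setOf_eq, not_le] at hω
          exact hω
        have h0 : (0:ℝ) ≤ 2 + μ/2 := by linarith
        have hle : 2 + μ/2 ≤ 2 + μ - S ω := by linarith
        exact pow_le_pow_left₀ h0 hle 2
      · rw [Set.indicator_of_notMem hω]; positivity
    have hmono := integral_mono hind_int hgint hpt
    rw [integral_indicator_const _ hTmeas.compl, smul_eq_mul] at hmono
    have hRb : (ℙ Tᶜ).toReal * (2 + μ/2)^2 ≤ 4 + μ := le_trans hmono hEg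
    have hq : 2*(4+μ) ≤ (2 + μ/2)^2 := by nlinarith
    have hfinal : (ℙ Tᶜ).toReal ≤ 1/2 := by
      nlinarith [mul_le_mul_of_nonneg_left hq hTcnn, hRb, hTcnn]
    linarith [hTc, hfinal]
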